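/- arXiv:1810.11949 — 2 statements merged into one kernel-verified Lean document; each statement's English description precedes it below -/
import Mathlib

section
/- Let M ∈ SL(2,ℤ) be hyperbolic (|Tr M| > 2) with larger eigenvalue modulus e^λ, λ > 0. Then there exists a constant C > 0 depending only on M such that for all integers N ≥ 2, the period P(N) of M modulo N satisfies P(N) ≥ (2/λ) log N − C. -/
/-- For a hyperbolic `M ∈ SL(2,ℤ)` with larger eigenvalue modulus `e^λ`, `λ > 0`
(so that `e^λ + e^{-λ} = |Tr M|`), there is `C > 0` depending only on `M` such that
for all `N ≥ 2` the period `P(N)` of `M` mod `N` satisfies `P(N) ≥ (2/λ) log N − C`. -/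
theorem stmt_3 (M : Matrix (Fin 2) (Fin 2) ℤ) (hdet : M.det = 1) (htr : |M.trace| > 2)
    (l : ℝ) (hl : 0 < l) (hltr : Real.exp l + Real.exp (-l) = |(M.trace : ℝ)|) :
    ∃ C : ℝ, 0 < C ∧ ∀ N : ℕ, 2 ≤ N → ∀ P : ℕ, 0 < P →
      (∀ i j, (N : ℤ) ∣ ((M ^ P) i j - (1 : Matrix (Fin 2) (Fin 2) ℤ) i j)) →
      (∀ k : ℕ, 0 < k →
        (∀ i j, (N : ℤ) ∣ ((M ^ k) i j - (1 : Matrix (Fin 2) (Fin 2) ℤ) i j)) → P ≤ k) →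
      (P : ℝ) ≥ 2 / l * Real.log N - C := by
  refine ⟨Real.log 4 / l, div_pos (Real.log_pos (by norm_num)) hl, ?_⟩
  intro N hN P hP hdvd _
  set t : ℤ := M.trace with ht
  have hdf : M 0 0 * M 1 1 - M 0 1 * M 1 0 = 1 := by
    rw [Matrix.det_fin_two] at hdet; exact hdet
  have htf : t = M 0 0 + M 1 1 := Matrix.trace_fin_two M
  -- Cayley-Hamilton for 2x2
  have hCH : M ^ 2 = t • M - 1 := by
    ext i j
    fin_cases i <;> fin_cases j <;>
      simp only [pow_two, Matrix.mul_apply, Fin.sum_univ_two, Matrix.sub_apply,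
        Matrix.smul_apply, Matrix.one_apply, smul_eq_mul, htf] <;>
      simp <;> linarith [hdf]
  -- trace recursion
  have hrec : ∀ k : ℕ, (M ^ (k + 2)).trace = t * (M ^ (k + 1)).trace - (M ^ k).trace := by
    intro k
    have : M ^ (k + 2) = t • M ^ (k + 1) - M ^ k := by
      rw [show k + 2 = k + 2 from rfl, pow_add, hCH]
      rw [Matrix.mul_sub, Matrix.mul_one, Matrix.mul_smul, ← pow_succ]
    rw [this, Matrix.trace_sub, Matrix.trace_smul]
    simp
  -- real eigenvalue pair
  have ht0 : t ≠ 0 := by intro h; rw [h] at htr; simp at htr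
  set s : ℝ := if 0 < t then 1 else -1 with hs
  have hs2 : s * s = 1 := by by_cases h : 0 < t <;> simp [hs, h]
  set μ : ℝ := s * Real.exp l with hμ
  set ν : ℝ := s * Real.exp (-l) with hν
  have hμν : μ * ν = 1 := by
    rw [hμ, hν]
    rw [show s * Real.exp l * (s * Real.exp (-l)) = (s * s) * (Real.exp l * Real.exp (-l)) by ring,
      hs2, ← Real.exp_add]
    simp
  have hsum : μ + ν = (t : ℝ) := by
    by_cases h : 0 < t
    · have : |(t : ℝ)| = (t : ℝ) := abs_of_pos (by exact_mod_cast h)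
      rw [hμ, hν, hs, if_pos h]
      rw [this] at hltr; linarith
    · have htneg : t < 0 := lt_of_le_of_ne (not_lt.mp h) ht0
      have : |(t : ℝ)| = -(t : ℝ) := abs_of_neg (by exact_mod_cast htneg)
      rw [hμ, hν, hs, if_neg h]
      rw [this] at hltr; linarith
  -- trace formula
  have key : ∀ k : ℕ, (((M ^ k).trace : ℤ) : ℝ) = μ ^ k + ν ^ k ∧
      (((M ^ (k + 1)).trace : ℤ) : ℝ) = μ ^ (k + 1) + ν ^ (k + 1) := by
    intro k
    induction k with
    | zero => simp [hsum, Matrix.trace_one]; norm_num; exact ht.symm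
    | succ n ih =>
      refine ⟨ih.2, ?_⟩
      rw [hrec n]
      push_cast
      rw [ih.1, ih.2, ← hsum]
      have : (μ + ν) * (μ ^ (n + 1) + ν ^ (n + 1)) - (μ ^ n + ν ^ n)
          = μ ^ (n + 2) + ν ^ (n + 2) + (μ * ν - 1) * (μ ^ n + ν ^ n) := by ring
      rw [this, hμν]; ring
  obtain ⟨htrP, -⟩ := key P
  have habsP : |μ ^ P + ν ^ P| = Real.exp (l * P) + Real.exp (-(l * P)) := by
    have : μ ^ P + ν ^ P = s ^ P * (Real.exp (l * P) + Real.exp (-(l * P))) := by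
      rw [hμ, hν, mul_pow, mul_pow, ← Real.exp_nat_mul, ← Real.exp_nat_mul]
      ring_nf
    rw [this, abs_mul, abs_pow]
    have : |s| = 1 := by by_cases h : 0 < t <;> simp [hs, h]
    rw [this, one_pow, one_mul, abs_of_pos (by positivity)]
  have hPpos : (0:ℝ) < (P : ℝ) := by exact_mod_cast hP
  have hexp1 : 1 < Real.exp (l * P) := by
    have h0 : (0:ℝ) < l * P := mul_pos hl hPpos
    calc (1:ℝ) = Real.exp 0 := by simp
      _ < Real.exp (l * P) := Real.exp_lt_exp.mpr h0
  have habs_gt : 2 < |μ ^ P + ν ^ P| := by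
    rw [habsP]
    have hb : Real.exp (-(l * P)) * Real.exp (l * P) = 1 := by
      rw [← Real.exp_add]; simp
    have hbpos : 0 < Real.exp (-(l * (P:ℝ))) := Real.exp_pos _
    have hb1 : Real.exp (-(l * (P:ℝ))) < 1 := by nlinarith
    nlinarith
  -- divisibility: N^2 ∣ 2 - trace (M^P)
  have hA := hdvd
  set A := M ^ P with hAdef
  have hdA : A 0 0 * A 1 1 - A 0 1 * A 1 0 = 1 := by
    have : A.det = 1 := by rw [hAdef, Matrix.det_pow, hdet, one_pow]
    rw [Matrix.det_fin_two] at this; exact this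
  have htA : A.trace = A 0 0 + A 1 1 := Matrix.trace_fin_two A
  have hd00 : (N : ℤ) ∣ A 0 0 - 1 := by simpa [Matrix.one_apply] using hA 0 0
  have hd11 : (N : ℤ) ∣ A 1 1 - 1 := by simpa [Matrix.one_apply] using hA 1 1
  have hd01 : (N : ℤ) ∣ A 0 1 := by simpa [Matrix.one_apply] using hA 0 1
  have hd10 : (N : ℤ) ∣ A 1 0 := by simpa [Matrix.one_apply] using hA 1 0
  have hdvd2 : ((N : ℤ)) ^ 2 ∣ 2 - A.trace := by
    have h1 : ((N : ℤ)) ^ 2 ∣ (A 0 0 - 1) * (A 1 1 - 1) - A 0 1 * A 1 0 := by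
      rw [pow_two]
      exact dvd_sub (mul_dvd_mul hd00 hd11) (mul_dvd_mul hd01 hd10)
    have h2 : (A 0 0 - 1) * (A 1 1 - 1) - A 0 1 * A 1 0 = 2 - A.trace := by
      rw [htA]; linarith [hdA]
    rwa [h2] at h1
  have hne : 2 - A.trace ≠ 0 := by
    intro h
    have : A.trace = 2 := by omega
    rw [this] at htrP
    rw [← htrP] at habs_gt
    norm_num at habs_gt
  have hle : ((N : ℤ)) ^ 2 ≤ |2 - A.trace| := Int.le_of_dvd (abs_pos.mpr hne) ((dvd_abs _ _).mpr hdvd2)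
  -- upper bound on |2 - trace|
  have h3 : Real.exp (-(l * P)) ≤ Real.exp (l * P) := by
    apply Real.exp_le_exp.mpr; nlinarith
  have hub : |((2 - A.trace : ℤ) : ℝ)| ≤ 4 * Real.exp (l * P) := by
    have h1 : |((2 - A.trace : ℤ) : ℝ)| ≤ 2 + |((A.trace : ℤ) : ℝ)| := by
      push_cast
      calc |(2 : ℝ) - (A.trace : ℝ)| ≤ |(2:ℝ)| + |(A.trace : ℝ)| := abs_sub _ _
        _ = 2 + |((A.trace : ℤ) : ℝ)| := by norm_num
    have h2 : |((A.trace : ℤ) : ℝ)| = Real.exp (l * P) + Real.exp (-(l * P)) := by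
      rw [htrP, habsP]
    rw [h2] at h1
    linarith
  have hNR : ((N : ℝ)) ^ 2 ≤ 4 * Real.exp (l * P) := by
    have : (((N : ℤ)) ^ 2 : ℝ) ≤ |((2 - A.trace : ℤ) : ℝ)| := by
      rw [← Int.cast_abs]; exact_mod_cast hle
    push_cast at this hub ⊢
    linarith
  have hNpos : (0:ℝ) < (N : ℝ) := by positivity
  have hlog : 2 * Real.log N ≤ Real.log 4 + l * P := by
    have h1 : Real.log (((N:ℝ)) ^ 2) ≤ Real.log (4 * Real.exp (l * P)) :=
      Real.log_le_log (by positivity) hNR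
    rw [Real.log_pow, Real.log_mul (by norm_num) (Real.exp_ne_zero _), Real.log_exp] at h1
    push_cast at h1
    linarith
  rw [ge_iff_le, show 2 / l * Real.log N - Real.log 4 / l
      = (2 * Real.log N - Real.log 4) / l by ring, div_le_iff₀ hl]
  linarith
end

section
/- (Abstract variance bound via ergodic averaging) Let H be an N-dimensional complex inner product space with orthonormal basis {φ_j}, let U be a unitary operator on H with U φ_j = e^{iθ_j} φ_j, and let A be an operator on H. Suppose T ≥ 1 is an integer such that Tr((U^t A U^{-t})* (U^s A U^{-s})) = N if t = s and = 0 otherwise, for 0 ≤ t,s ≤ T−1. Then (1/N) Σ_{j=1}^N |⟨A φ_j, φ_j⟩|² ≤ 1/T. -/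
open scoped ComplexConjugate

section aux

variable {H : Type*} [NormedAddCommGroup H] [InnerProductSpace ℂ H]
    [FiniteDimensional ℂ H] {N : ℕ}

lemma trace_eq_sum_inner' (φ : OrthonormalBasis (Fin N) ℂ H)
    (f : H →ₗ[ℂ] H) :
    LinearMap.trace ℂ H f = ∑ j, (inner ℂ (φ j) (f (φ j)) : ℂ) := by
  rw [LinearMap.trace_eq_matrix_trace ℂ φ.toBasis f, Matrix.trace]
  congr 1
  ext j
  rw [Matrix.diag_apply, LinearMap.toMatrix_apply, OrthonormalBasis.coe_toBasis,
    OrthonormalBasis.coe_toBasis_repr_apply, OrthonormalBasis.repr_apply_apply]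

omit [FiniteDimensional ℂ H] in
lemma key_diag
    (φ : OrthonormalBasis (Fin N) ℂ H)
    (U : H ≃ₗᵢ[ℂ] H) (θ : Fin N → ℝ)
    (hU : ∀ j, U (φ j) = Complex.exp (θ j * Complex.I) • φ j)
    (A : H →ₗ[ℂ] H) (t : ℕ) (j : Fin N) :
    (inner ℂ (((U.toLinearEquiv.toLinearMap ^ t : H →ₗ[ℂ] H) ∘ₗ A ∘ₗ
        (U.symm.toLinearEquiv.toLinearMap ^ t : H →ₗ[ℂ] H)) (φ j)) (φ j) : ℂ)
      = inner ℂ (A (φ j)) (φ j) := by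
  set M : H →ₗ[ℂ] H := U.toLinearEquiv.toLinearMap with hM
  set M' : H →ₗ[ℂ] H := U.symm.toLinearEquiv.toLinearMap with hM'
  set c : ℂ := Complex.exp (θ j * Complex.I) with hc
  have hc0 : c ≠ 0 := Complex.exp_ne_zero _
  have hconj : conj c = c⁻¹ := by
    rw [hc, ← Complex.exp_conj, ← Complex.exp_neg]
    congr 1
    simp [Complex.conj_I]
  have hUsymm : U.symm (φ j) = c⁻¹ • φ j := by
    have h1 : U.symm (U (φ j)) = φ j := U.symm_apply_apply _
    rw [hU j, map_smul] at h1
    rw [eq_comm, inv_smul_eq_iff₀ hc0]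
    exact h1.symm
  have hM't : (M' ^ t) (φ j) = (c⁻¹) ^ t • φ j := by
    induction t with
    | zero => simp
    | succ n ih =>
      rw [pow_succ, Module.End.mul_apply, show M' (φ j) = c⁻¹ • φ j from hUsymm,
        map_smul, ih, smul_smul, ← pow_succ']
  have hMinner : ∀ (n : ℕ) (z : H),
      (inner ℂ ((M ^ n) z) (φ j) : ℂ) = (c⁻¹) ^ n * inner ℂ z (φ j) := by
    intro n
    induction n with
    | zero => intro z; simp
    | succ n ih =>
      intro z
      have hstep : ∀ w : H, (inner ℂ (M w) (φ j) : ℂ) = c⁻¹ * inner ℂ w (φ j) := by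
        intro w
        have hφ : (φ j : H) = c⁻¹ • U (φ j) := by
          rw [hU j, smul_smul, inv_mul_cancel₀ hc0, one_smul]
        calc (inner ℂ (M w) (φ j) : ℂ) = inner ℂ (U w) (c⁻¹ • U (φ j)) := by
              rw [← hφ]; rfl
          _ = c⁻¹ * inner ℂ (U w) (U (φ j)) := by rw [inner_smul_right]
          _ = c⁻¹ * inner ℂ w (φ j) := by rw [LinearIsometryEquiv.inner_map_map]
      rw [pow_succ, Module.End.mul_apply, ih, hstep]
      ring
  have : (((M ^ t) ∘ₗ A ∘ₗ (M' ^ t)) (φ j)) = (c⁻¹) ^ t • (M ^ t) (A (φ j)) := by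
    simp only [LinearMap.comp_apply, hM't, map_smul]
  rw [this, inner_smul_left, hMinner t, map_pow, map_inv₀, hconj, inv_inv]
  rw [← mul_assoc, ← mul_pow, mul_inv_cancel₀ hc0, one_pow, one_mul]

end aux

/-- Abstract variance bound via ergodic averaging: if `{φ_j}` is an orthonormal eigenbasis of
a unitary `U` on an `N`-dimensional Hilbert space, `A` an operator, and `T ≥ 1` is such that
the conjugated operators `U^t A U^{-t}`, `0 ≤ t ≤ T−1`, satisfy the trace orthogonality
`Tr((U^t A U^{-t})* (U^s A U^{-s})) = N δ_{ts}`, then `(1/N) Σ_j |⟨Aφ_j,φ_j⟩|² ≤ 1/T`. -/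
theorem stmt_7 {H : Type*} [NormedAddCommGroup H] [InnerProductSpace ℂ H]
    [FiniteDimensional ℂ H]
    (N T : ℕ) (hN : 0 < N) (hT : 1 ≤ T)
    (φ : OrthonormalBasis (Fin N) ℂ H)
    (U : H ≃ₗᵢ[ℂ] H) (θ : Fin N → ℝ)
    (hU : ∀ j, U (φ j) = Complex.exp (θ j * Complex.I) • φ j)
    (A : H →ₗ[ℂ] H)
    (htr : ∀ t s : ℕ, t < T → s < T →
      LinearMap.trace ℂ H
        ((LinearMap.adjoint
            ((U.toLinearEquiv.toLinearMap ^ t : H →ₗ[ℂ] H) ∘ₗ A ∘ₗ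
              (U.symm.toLinearEquiv.toLinearMap ^ t : H →ₗ[ℂ] H)) : H →ₗ[ℂ] H) ∘ₗ
          ((U.toLinearEquiv.toLinearMap ^ s : H →ₗ[ℂ] H) ∘ₗ A ∘ₗ
            (U.symm.toLinearEquiv.toLinearMap ^ s : H →ₗ[ℂ] H)))
        = if t = s then (N : ℂ) else 0) :
    (1 / N : ℝ) * ∑ j, ‖(inner ℂ (A (φ j)) (φ j) : ℂ)‖ ^ 2 ≤ 1 / T := by
  classical
  set C : ℕ → (H →ₗ[ℂ] H) := fun t =>
    (U.toLinearEquiv.toLinearMap ^ t : H →ₗ[ℂ] H) ∘ₗ A ∘ₗ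
      (U.symm.toLinearEquiv.toLinearMap ^ t : H →ₗ[ℂ] H) with hC
  set B : H →ₗ[ℂ] H := ∑ t ∈ Finset.range T, C t with hB
  -- diagonal entries
  have hBdiag : ∀ j, (inner ℂ (B (φ j)) (φ j) : ℂ) = (T : ℂ) * inner ℂ (A (φ j)) (φ j) := by
    intro j
    rw [hB, LinearMap.sum_apply, sum_inner]
    rw [Finset.sum_congr rfl (fun t _ => key_diag φ U θ hU A t j)]
    simp [Finset.sum_const, mul_comm]
  -- trace computation
  have hBtrace : LinearMap.trace ℂ H (LinearMap.adjoint B ∘ₗ B) = (T : ℂ) * N := by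
    have hadj : LinearMap.adjoint B = ∑ t ∈ Finset.range T, LinearMap.adjoint (C t) := by
      rw [hB, map_sum]
    rw [hadj, hB, ← Module.End.mul_eq_comp, Finset.sum_mul_sum, map_sum]
    rw [Finset.sum_congr rfl (fun t ht => map_sum _ _ _)]
    calc ∑ t ∈ Finset.range T, ∑ s ∈ Finset.range T,
          (LinearMap.trace ℂ H) (LinearMap.adjoint (C t) ∘ₗ C s)
        = ∑ t ∈ Finset.range T, ∑ s ∈ Finset.range T, (if t = s then (N:ℂ) else 0) := by
          refine Finset.sum_congr rfl fun t ht => Finset.sum_congr rfl fun s hs => ?_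
          exact htr t s (Finset.mem_range.mp ht) (Finset.mem_range.mp hs)
      _ = ∑ t ∈ Finset.range T, (N:ℂ) := by
          refine Finset.sum_congr rfl fun t ht => ?_
          simp [Finset.sum_ite_eq (Finset.range T) t, ht]
      _ = (T:ℂ) * N := by simp [mul_comm]
  -- trace as sum of norms
  have hBnorm : ∑ j, ‖B (φ j)‖ ^ 2 = (T : ℝ) * N := by
    have h1 : LinearMap.trace ℂ H (LinearMap.adjoint B ∘ₗ B)
        = ∑ j, ((‖B (φ j)‖ : ℂ)) ^ 2 := by
      rw [trace_eq_sum_inner' φ]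
      refine Finset.sum_congr rfl fun j _ => ?_
      rw [LinearMap.comp_apply, LinearMap.adjoint_inner_right,
        inner_self_eq_norm_sq_to_K]
      norm_cast
    rw [h1] at hBtrace
    have h2 := congrArg Complex.re hBtrace
    simpa [← Complex.ofReal_pow] using h2
  -- Cauchy-Schwarz pointwise
  have hCS : ∀ j, ((T:ℝ) * ‖(inner ℂ (A (φ j)) (φ j) : ℂ)‖) ^ 2 ≤ ‖B (φ j)‖ ^ 2 := by
    intro j
    have h1 : ‖(inner ℂ (B (φ j)) (φ j) : ℂ)‖ = (T:ℝ) * ‖(inner ℂ (A (φ j)) (φ j) : ℂ)‖ := by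
      rw [hBdiag j, norm_mul, Complex.norm_natCast]
    have h2 : ‖(inner ℂ (B (φ j)) (φ j) : ℂ)‖ ≤ ‖B (φ j)‖ := by
      have := norm_inner_le_norm (𝕜 := ℂ) (B (φ j)) (φ j)
      rwa [φ.orthonormal.1 j, mul_one] at this
    have := h2
    rw [h1] at this
    exact pow_le_pow_left₀ (by positivity) this 2
  -- combine
  have hsum : (T:ℝ)^2 * ∑ j, ‖(inner ℂ (A (φ j)) (φ j) : ℂ)‖ ^ 2 ≤ (T:ℝ) * N := by
    rw [Finset.mul_sum]
    calc ∑ j, (T:ℝ)^2 * ‖(inner ℂ (A (φ j)) (φ j) : ℂ)‖ ^ 2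
        = ∑ j, ((T:ℝ) * ‖(inner ℂ (A (φ j)) (φ j) : ℂ)‖) ^ 2 := by
          refine Finset.sum_congr rfl fun j _ => ?_; ring
      _ ≤ ∑ j, ‖B (φ j)‖ ^ 2 := Finset.sum_le_sum fun j _ => hCS j
      _ = (T:ℝ) * N := hBnorm
  have hT0 : (0:ℝ) < T := by exact_mod_cast hT
  have hN0 : (0:ℝ) < N := by exact_mod_cast hN
  rw [div_mul_eq_mul_div, one_mul, div_le_div_iff₀ hN0 hT0]
  nlinarith [hsum]
end
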